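/- Let P = {(x, y) ∈ ℝ^n × ℝ^m : Ax + By ≤ b} be nonempty and let x̄ be any point of the projection of P onto ℝ^n that lies in the relative interior of this projection. Then the polyhedron P̃ = {y ∈ ℝ^m : By ≤ b − Ax̄} is nonempty and has the same equality set as P, i.e., an index i satisfies (Bᵢ)ᵀy = bᵢ − (Aᵢ)ᵀx̄ for all y ∈ P̃ if and only if i is in eq(P). -/

import Mathlib

lemma extend_point_aux {n : ℕ} (Q : Set (Fin n → ℝ)) (xbar x : Fin n → ℝ)
    (hxbar : xbar ∈ intrinsicInterior ℝ Q) (hx : x ∈ Q) :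
    ∃ δ : ℝ, 0 < δ ∧ xbar + δ • (xbar - x) ∈ Q := by
  rw [mem_intrinsicInterior] at hxbar
  obtain ⟨p, hp, hpe⟩ := hxbar
  rw [mem_interior_iff_mem_nhds, Metric.mem_nhds_iff] at hp
  obtain ⟨ε, hε, hball⟩ := hp
  set c := ‖xbar - x‖ with hc
  have hc0 : 0 ≤ c := norm_nonneg _
  set δ := ε / (2 * (c + 1)) with hδdef
  have hδ : 0 < δ := by positivity
  refine ⟨δ, hδ, ?_⟩
  -- membership of the new point in the affine span
  have hxQbar : xbar ∈ Q := by
    rw [← hpe]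
    exact hball (Metric.mem_ball_self hε)
  have hxs : xbar ∈ affineSpan ℝ Q := subset_affineSpan ℝ Q hxQbar
  have hxs' : x ∈ affineSpan ℝ Q := subset_affineSpan ℝ Q hx
  have hmem : xbar + δ • (xbar - x) ∈ affineSpan ℝ Q := by
    have := (affineSpan ℝ Q).smul_vsub_vadd_mem δ hxs hxs' hxs
    simpa [vsub_eq_sub, vadd_eq_add, add_comm] using this
  -- it is in the ball around p
  have hdist : dist (⟨xbar + δ • (xbar - x), hmem⟩ : affineSpan ℝ Q) p < ε := by
    rw [Subtype.dist_eq, hpe]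
    have : dist (xbar + δ • (xbar - x)) xbar = ‖δ • (xbar - x)‖ := dist_self_add_left _ _
    rw [this, norm_smul, Real.norm_eq_abs, abs_of_pos hδ, ← hc]
    have h1 : δ * c ≤ δ * (c + 1) := by nlinarith
    have h2 : δ * (c + 1) = ε / 2 := by
      rw [hδdef]; field_simp
    linarith
  have := hball hdist
  exact this

theorem fixed_projection_point_same_equality_set {n m k : ℕ}
    (A : Matrix (Fin k) (Fin n) ℝ) (B : Matrix (Fin k) (Fin m) ℝ) (b : Fin k → ℝ)
    (P : Set ((Fin n → ℝ) × (Fin m → ℝ)))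
    (hP : P = {z | ∀ i, A.mulVec z.1 i + B.mulVec z.2 i ≤ b i})
    (hne : P.Nonempty)
    (xbar : Fin n → ℝ) (hx : xbar ∈ intrinsicInterior ℝ (Prod.fst '' P))
    (Pt : Set (Fin m → ℝ)) (hPt : Pt = {y | ∀ i, B.mulVec y i ≤ b i - A.mulVec xbar i}) :
    Pt.Nonempty ∧
      ∀ i, (∀ y ∈ Pt, B.mulVec y i = b i - A.mulVec xbar i) ↔
        (∀ z ∈ P, A.mulVec z.1 i + B.mulVec z.2 i = b i) := by
  have hxQ : xbar ∈ Prod.fst '' P := intrinsicInterior_subset hx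
  obtain ⟨z0, hz0, hz0e⟩ := hxQ
  have hz0P : ∀ i, A.mulVec z0.1 i + B.mulVec z0.2 i ≤ b i := by
    rw [hP] at hz0; exact hz0
  constructor
  · refine ⟨z0.2, ?_⟩
    rw [hPt]
    intro i
    have := hz0P i
    rw [hz0e] at this
    linarith
  · intro i
    constructor
    · -- hard direction
      intro H z hz
      have hle : A.mulVec z.1 i + B.mulVec z.2 i ≤ b i := by rw [hP] at hz; exact hz i
      by_contra hne'
      have hlt : A.mulVec z.1 i + B.mulVec z.2 i < b i := lt_of_le_of_ne hle hne'
      have hz1Q : z.1 ∈ Prod.fst '' P := ⟨z, hz, rfl⟩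
      obtain ⟨δ, hδ, hx'⟩ := extend_point_aux (Prod.fst '' P) xbar z.1 hx hz1Q
      set x' := xbar + δ • (xbar - z.1) with hx'def
      obtain ⟨z', hz', hz'e⟩ := hx'
      have hz'P : ∀ j, A.mulVec z'.1 j + B.mulVec z'.2 j ≤ b j := by
        rw [hP] at hz'; exact hz'
      set e : ℝ := (1 + δ)⁻¹ with hedef
      have hep : 0 < e := by positivity
      have he1 : e * (1 + δ) = 1 := by
        rw [hedef]; field_simp
      set ybar : Fin m → ℝ := e • (δ • z.2 + z'.2) with hybar
      -- pointwise facts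
      have fA : ∀ j, A.mulVec z'.1 j = A.mulVec xbar j + δ * (A.mulVec xbar j - A.mulVec z.1 j) := by
        intro j
        rw [hz'e, hx'def]
        simp [Matrix.mulVec_add, Matrix.mulVec_smul, Matrix.mulVec_sub, Matrix.sub_mulVec]
      have fB : ∀ j, B.mulVec ybar j = e * (δ * B.mulVec z.2 j + B.mulVec z'.2 j) := by
        intro j
        rw [hybar]
        simp [Matrix.mulVec_add, Matrix.mulVec_smul]
        ring
      have hzP : ∀ j, A.mulVec z.1 j + B.mulVec z.2 j ≤ b j := by
        rw [hP] at hz; exact hz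
      have hybarPt : ybar ∈ Pt := by
        rw [hPt]
        intro j
        have h1 : A.mulVec z.1 j + B.mulVec z.2 j ≤ b j := hzP j
        have h2 := hz'P j
        rw [fA j] at h2
        have key : δ * B.mulVec z.2 j + B.mulVec z'.2 j
            ≤ (1 + δ) * (b j - A.mulVec xbar j) := by nlinarith
        have := mul_le_mul_of_nonneg_left key hep.le
        have he2 : e * ((1 + δ) * (b j - A.mulVec xbar j)) = b j - A.mulVec xbar j := by
          rw [← mul_assoc, he1, one_mul]
        rw [fB j]
        linarith
      have heq := H ybar hybarPt
      rw [fB i] at heq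
      have h2 := hz'P i
      rw [fA i] at h2
      have key : δ * B.mulVec z.2 i + B.mulVec z'.2 i
          < (1 + δ) * (b i - A.mulVec xbar i) := by nlinarith
      have := mul_lt_mul_of_pos_left key hep
      have he2 : e * ((1 + δ) * (b i - A.mulVec xbar i)) = b i - A.mulVec xbar i := by
        rw [← mul_assoc, he1, one_mul]
      linarith
    · intro H y hy
      have hyPt : ∀ j, B.mulVec y j ≤ b j - A.mulVec xbar j := by rw [hPt] at hy; exact hy
      have hmem : (xbar, y) ∈ P := by
        rw [hP]
        intro j
        have := hyPt j
        simp only [Set.mem_setOf_eq]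
        linarith
      have := H (xbar, y) hmem
      simp only at this
      linarith
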